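/- Let m ≥ 0 be real and C > 0, and suppose that for all n with p_n > x₀ the prime gap satisfies p_{n+1} - p_n < C · p_n / (ln p_n)^m. Then for all n with p_n > max(x₀, e^m), (ln p_{n+1})^(m+1) - (ln p_n)^(m+1) < (m+1) · C. -/

import Mathlib

-- pointwise: for m ≤ u ≤ s, 0 ≤ m, 0 < u: s^m * exp u ≤ u^m * exp s
lemma pointwise (m u s : ℝ) (hm : 0 ≤ m) (hu : m < u) (hs : u ≤ s) :
    s ^ m * Real.exp u ≤ u ^ m * Real.exp s := by
  have hu0 : 0 < u := lt_of_le_of_lt hm hu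
  have hs0 : 0 < s := lt_of_lt_of_le hu0 hs
  have h1 : Real.log (s / u) ≤ s / u - 1 := Real.log_le_sub_one_of_pos (by positivity)
  have h2 : m * Real.log (s / u) ≤ s - u := by
    have hnn : 0 ≤ s / u - 1 := by
      rw [sub_nonneg, le_div_iff₀ hu0, one_mul]; exact hs
    calc m * Real.log (s / u) ≤ m * (s / u - 1) := by
          exact mul_le_mul_of_nonneg_left h1 hm
      _ ≤ u * (s / u - 1) := mul_le_mul_of_nonneg_right hu.le hnn
      _ = s - u := by field_simp
  have h3 : (s / u) ^ m ≤ Real.exp (s - u) := by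
    rw [Real.rpow_def_of_pos (by positivity)]
    exact Real.exp_le_exp.mpr (by rw [mul_comm]; exact h2)
  have h4 : s ^ m = u ^ m * (s / u) ^ m := by
    rw [← Real.mul_rpow hu0.le (by positivity)]
    congr 1
    field_simp
  calc s ^ m * Real.exp u = u ^ m * ((s / u) ^ m * Real.exp u) := by rw [h4]; ring
    _ ≤ u ^ m * (Real.exp (s - u) * Real.exp u) := by
        apply mul_le_mul_of_nonneg_left _ (by positivity)
        exact mul_le_mul_of_nonneg_right h3 (Real.exp_pos u).le
    _ = u ^ m * Real.exp s := by rw [← Real.exp_add]; ring_nf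

lemma hasDerivLogPow (m x : ℝ) (hx : 0 < x) (hlx : Real.log x ≠ 0) :
    HasDerivAt (fun y => Real.log y ^ (m+1)) ((m+1) * Real.log x ^ m / x) x := by
  have h1 := Real.hasDerivAt_log hx.ne'
  have h2 := Real.hasDerivAt_rpow_const (x := Real.log x) (p := m+1) (Or.inl hlx)
  have h3 := h2.comp x h1
  have h4 : (m+1) * Real.log x ^ (m+1-1) * x⁻¹ = (m+1) * Real.log x ^ m / x := by
    rw [show m + 1 - 1 = m by ring, div_eq_mul_inv]
  rw [h4] at h3
  exact h3

lemma key (m a b : ℝ) (hm : 0 ≤ m) (ha : Real.exp m < a) (hab : a ≤ b) :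
    Real.log b ^ (m+1) - Real.log a ^ (m+1) ≤
      (m+1) * Real.log a ^ m / a * (b - a) := by
  have ha0 : 0 < a := (Real.exp_pos m).trans ha
  have hu : m < Real.log a := (Real.lt_log_iff_exp_lt ha0).mpr ha
  have hu0 : 0 < Real.log a := lt_of_le_of_lt hm hu
  set c := (m+1) * Real.log a ^ m / a with hc
  have hG : ∀ x ∈ Set.Ioi a, HasDerivAt (fun y => c * y - Real.log y ^ (m+1))
      (c - (m+1) * Real.log x ^ m / x) x := by
    intro x hx
    have hx0 : 0 < x := ha0.trans hx
    have hlx : Real.log x ≠ 0 := by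
      have h5 : Real.log a ≤ Real.log x := Real.log_le_log ha0 (le_of_lt hx)
      exact ne_of_gt (lt_of_lt_of_le hu0 h5)
    have := ((hasDerivAt_id x).const_mul c).sub (hasDerivLogPow m x hx0 hlx)
    exact this.congr_deriv (by ring)
  have hmono : MonotoneOn (fun y => c * y - Real.log y ^ (m+1)) (Set.Ici a) := by
    apply monotoneOn_of_deriv_nonneg (convex_Ici a)
    · intro y hy
      have hy0 : 0 < y := lt_of_lt_of_le ha0 hy
      apply ContinuousWithinAt.sub
      · exact (continuousAt_id.const_smul c).continuousWithinAt
      · exact ((Real.continuousAt_rpow_const _ _ (Or.inr (by positivity))).comp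
          (Real.continuousAt_log hy0.ne')).continuousWithinAt
    · rw [interior_Ici]
      exact fun x hx => ((hG x hx).differentiableAt).differentiableWithinAt
    · rw [interior_Ici]
      intro x hx
      rw [(hG x hx).deriv]
      have hx0 : 0 < x := ha0.trans hx
      have hus : Real.log a ≤ Real.log x := Real.log_le_log ha0 (le_of_lt hx)
      have hpw := pointwise m (Real.log a) (Real.log x) hm hu hus
      rw [Real.exp_log ha0, Real.exp_log hx0] at hpw
      have : (m+1) * Real.log x ^ m / x ≤ c := by
        rw [hc, div_le_div_iff₀ hx0 ha0]
        have := mul_le_mul_of_nonneg_left hpw (by positivity : (0:ℝ) ≤ m + 1)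
        nlinarith
      linarith
  have := hmono (Set.self_mem_Ici) (Set.mem_Ici.mpr hab) hab
  simp only at this
  linarith

/-- `prime n` is the n-th prime, with `prime 1 = 2`. -/
noncomputable def prime (n : ℕ) : ℕ := Nat.nth Nat.Prime (n - 1)

theorem explicit_unconditional_bound (m C x₀ : ℝ) (hm : 0 ≤ m) (hC : 0 < C)
    (h : ∀ n : ℕ, x₀ < prime n →
      (prime (n+1) : ℝ) - prime n < C * prime n / Real.log (prime n) ^ m) :
    ∀ n : ℕ, max x₀ (Real.exp m) < prime n →
      Real.log (prime (n+1)) ^ (m+1) - Real.log (prime n) ^ (m+1) <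
        (m+1) * C := by
  intro n hn
  rw [max_lt_iff] at hn
  obtain ⟨hx0, hexp⟩ := hn
  set a : ℝ := (prime n : ℝ) with ha
  set b : ℝ := (prime (n+1) : ℝ) with hb
  have ha0 : 0 < a := (Real.exp_pos m).trans hexp
  have hab : a ≤ b := by
    rw [ha, hb]
    exact_mod_cast Nat.nth_monotone Nat.infinite_setOf_prime
      (by omega : n - 1 ≤ n + 1 - 1)
  have hu : m < Real.log a := (Real.lt_log_iff_exp_lt ha0).mpr hexp
  have hu0 : 0 < Real.log a := lt_of_le_of_lt hm hu
  have hupos : 0 < Real.log a ^ m := Real.rpow_pos_of_pos hu0 m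
  have hgap := h n hx0
  have hkey := key m a b hm hexp hab
  have hcpos : 0 < (m+1) * Real.log a ^ m / a := by positivity
  calc Real.log b ^ (m+1) - Real.log a ^ (m+1)
      ≤ (m+1) * Real.log a ^ m / a * (b - a) := hkey
    _ < (m+1) * Real.log a ^ m / a * (C * a / Real.log a ^ m) :=
        mul_lt_mul_of_pos_left hgap hcpos
    _ = (m+1) * C := by field_simp
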